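/- Let Q = {1,…,p}, σ : [0,∞) → Q a piecewise-constant switching signal, V : ℝⁿ → ℝ differentiable and bounded below, W_q : ℝⁿ → [0,∞) lower semicontinuous, and φ : [0,∞) → ℝⁿ bounded and locally absolutely continuous with d/dt V(φ(t)) ≤ −W_{σ(t)}(φ(t)) for a.e. t. Fix q ∈ Q and suppose the set T_q = {t : σ(t) = q} has infinite Lebesgue measure. Then there exists a sequence t_j ∈ T_q with t_j → ∞ and W_q(φ(t_j)) → 0. -/

import Mathlib

open Set MeasureTheory Filter

theorem stmt9 {n p : ℕ}
    (σ : ℝ → Fin p)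
    -- σ is a piecewise-constant switching signal
    (hσ : ∃ τ : ℕ → ℝ, τ 0 = 0 ∧ StrictMono τ ∧ Tendsto τ atTop atTop ∧
          ∀ j : ℕ, ∀ s ∈ Ico (τ j) (τ (j+1)), σ s = σ (τ j))
    (V : EuclideanSpace ℝ (Fin n) → ℝ)
    (hV : Differentiable ℝ V) (hVb : ∃ c, ∀ x, c ≤ V x)
    (W : Fin p → EuclideanSpace ℝ (Fin n) → ℝ)
    (hWlsc : ∀ q, LowerSemicontinuous (W q)) (hWnn : ∀ q x, 0 ≤ W q x)
    (φ φ' : ℝ → EuclideanSpace ℝ (Fin n))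
    -- φ bounded, locally absolutely continuous with a.e. derivative φ'
    (hφb : ∃ R, ∀ t ∈ Ici (0:ℝ), ‖φ t‖ ≤ R)
    (hφint : ∀ T : ℝ, IntervalIntegrable φ' volume 0 T)
    (hφFTC : ∀ t ∈ Ici (0:ℝ), φ t = φ 0 + ∫ s in (0:ℝ)..t, φ' s)
    -- V ∘ φ is locally absolutely continuous with a.e. derivative h
    (h : ℝ → ℝ)
    (hloc : ∀ T : ℝ, IntervalIntegrable h volume 0 T)
    (hFTC : ∀ t ∈ Ici (0:ℝ), V (φ t) = V (φ 0) + ∫ s in (0:ℝ)..t, h s)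
    -- d/dt V(φ(t)) ≤ -W_{σ(t)}(φ(t)) a.e.
    (hineq : ∀ᵐ t ∂volume, t ∈ Ici (0:ℝ) → h t ≤ -(W (σ t) (φ t)))
    (q : Fin p)
    -- T_q = {t : σ(t) = q} has infinite measure
    (hq : volume {t : ℝ | 0 ≤ t ∧ σ t = q} = ⊤) :
    ∃ t : ℕ → ℝ, (∀ j, 0 ≤ t j ∧ σ (t j) = q) ∧
      Tendsto t atTop atTop ∧
      Tendsto (fun j => W q (φ (t j))) atTop (nhds 0) := by
  classical
  obtain ⟨τ, hτ0, hτmono, hτtop, hτpc⟩ := hσ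
  obtain ⟨c, hc⟩ := hVb
  set C := V (φ 0) - c with hCdef
  have hC0 : 0 ≤ C := sub_nonneg.2 (hc _)
  -- every t ≥ 0 is in some interval [τ j, τ (j+1))
  have hcover : ∀ t : ℝ, 0 ≤ t → ∃ j, t ∈ Ico (τ j) (τ (j+1)) := by
    intro t ht
    have hex : ∃ k, t < τ k := (hτtop.eventually (eventually_gt_atTop t)).exists
    have hk1 : t < τ (Nat.find hex) := Nat.find_spec hex
    have hkpos : Nat.find hex ≠ 0 := by
      intro h0
      rw [h0, hτ0] at hk1
      linarith
    obtain ⟨m, hm⟩ := Nat.exists_eq_succ_of_ne_zero hkpos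
    rw [hm] at hk1
    refine ⟨m, ?_, hk1⟩
    by_contra hlt
    push_neg at hlt
    exact Nat.find_min hex (hm ▸ Nat.lt_succ_self m) hlt
  set Sq := {t : ℝ | 0 ≤ t ∧ σ t = q} with hSqdef
  have hSqm : MeasurableSet Sq := by
    have hrep : Sq = ⋃ j : ℕ, if σ (τ j) = q then Ico (τ j) (τ (j+1)) else ∅ := by
      ext t
      simp only [mem_iUnion, hSqdef, mem_setOf_eq]
      constructor
      · rintro ⟨ht0, htq⟩
        obtain ⟨j, hj⟩ := hcover t ht0
        refine ⟨j, ?_⟩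
        rw [if_pos (by rw [← hτpc j t hj, htq])]
        exact hj
      · rintro ⟨j, hj⟩
        by_cases hq' : σ (τ j) = q
        · rw [if_pos hq'] at hj
          have h0 : (0:ℝ) ≤ τ j := hτ0 ▸ hτmono.monotone (Nat.zero_le j)
          exact ⟨le_trans h0 hj.1, (hτpc j t hj).trans hq'⟩
        · rw [if_neg hq'] at hj
          exact absurd hj (notMem_empty t)
    rw [hrep]
    exact MeasurableSet.iUnion fun j => by
      split
      · exact measurableSet_Ico
      · exact MeasurableSet.empty
  -- key claim
  have key : ∀ ε : ℝ, 0 < ε → ∀ T : ℝ, 0 ≤ T →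
      ∃ t, T < t ∧ σ t = q ∧ W q (φ t) < ε := by
    intro ε hε T hT
    by_contra hcon
    push_neg at hcon
    -- Sq ∩ Ioi T has infinite measure
    have hinf : volume (Sq ∩ Ioi T) = ⊤ := by
      by_contra hfin
      have hsub : Sq ⊆ (Sq ∩ Ioi T) ∪ Icc 0 T := by
        intro t ht
        rcases le_or_gt t T with hle | hgt
        · exact Or.inr ⟨ht.1, hle⟩
        · exact Or.inl ⟨ht, hgt⟩
      have hle := (measure_mono (μ := volume) hsub).trans (measure_union_le _ _)
      rw [hq] at hle
      have hlt : volume (Sq ∩ Ioi T) + volume (Icc (0:ℝ) T) < ⊤ :=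
        ENNReal.add_lt_top.2 ⟨lt_top_iff_ne_top.2 hfin, measure_Icc_lt_top⟩
      exact absurd (lt_of_le_of_lt hle hlt) (lt_irrefl ⊤)
    have hUnion : Sq ∩ Ioi T = ⋃ k : ℕ, Sq ∩ Ioc T (T + k) := by
      ext t
      simp only [mem_iUnion, mem_inter_iff, mem_Ioi, mem_Ioc]
      constructor
      · rintro ⟨hs, hT'⟩
        obtain ⟨k, hk⟩ := exists_nat_ge (t - T)
        exact ⟨k, hs, hT', by linarith⟩
      · rintro ⟨k, hs, h1, _⟩
        exact ⟨hs, h1⟩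
    have hmono : Monotone (fun k : ℕ => Sq ∩ Ioc T (T + k)) := by
      intro a b hab
      exact inter_subset_inter_right _
        (Ioc_subset_Ioc le_rfl (by exact_mod_cast add_le_add_right (Nat.cast_le.2 hab) T))
    have hsup : (⨆ k : ℕ, volume (Sq ∩ Ioc T (T + k))) = ⊤ := by
      rw [← hmono.directed_le.measure_iUnion, ← hUnion, hinf]
    obtain ⟨k, hk⟩ : ∃ k : ℕ, ENNReal.ofReal (C / ε) < volume (Sq ∩ Ioc T (T + k)) := by
      have hlt : ENNReal.ofReal (C / ε) < ⨆ k : ℕ, volume (Sq ∩ Ioc T (T + k)) := by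
        rw [hsup]; exact ENNReal.ofReal_lt_top
      exact lt_iSup_iff.mp hlt
    set T' := T + (k:ℝ) with hT'def
    have hT'0 : 0 ≤ T' := by positivity
    set E := Sq ∩ Ioc T T' with hEdef
    have hEm : MeasurableSet E := hSqm.inter measurableSet_Ioc
    have hEfin : volume E ≠ ⊤ :=
      (lt_of_le_of_lt (measure_mono inter_subset_right) measure_Ioc_lt_top).ne
    have hEsub : E ⊆ Ioc 0 T' := fun t ht => ⟨lt_of_le_of_lt hT ht.2.1, ht.2.2⟩
    have hnegint : IntegrableOn (fun s => -h s) (Ioc 0 T') volume := (hloc T').1.neg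
    have hnegE : IntegrableOn (fun s => -h s) E volume := hnegint.mono_set hEsub
    have hineq' : (0 : ℝ → ℝ) ≤ᵐ[volume.restrict (Ioc 0 T')] fun s => -h s := by
      filter_upwards [ae_restrict_of_ae hineq, ae_restrict_mem measurableSet_Ioc]
        with s h1 h2
      have h3 := h1 (le_of_lt h2.1)
      have h4 := hWnn (σ s) (φ s)
      simp only [Pi.zero_apply]
      linarith
    have hεE : (fun _ : ℝ => ε) ≤ᵐ[volume.restrict E] fun s => -h s := by
      filter_upwards [ae_restrict_of_ae hineq, ae_restrict_mem hEm] with s h1 h2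
      have h3 := h1 (le_trans hT (le_of_lt h2.2.1))
      have h4 : σ s = q := h2.1.2
      have h5 := hcon s h2.2.1 h4
      rw [h4] at h3
      linarith
    have step1 : ε * (volume E).toReal ≤ ∫ s in E, -h s := by
      have := setIntegral_mono_ae_restrict
        (integrableOn_const hEfin) hnegE hεE
      rw [setIntegral_const, smul_eq_mul, measureReal_def] at this
      linarith
    have step2 : ∫ s in E, -h s ≤ ∫ s in Ioc 0 T', -h s :=
      setIntegral_mono_set hnegint hineq' (HasSubset.Subset.eventuallyLE hEsub)
    have step3 : ∫ s in Ioc (0:ℝ) T', -h s ≤ C := by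
      rw [integral_neg]
      have hVT := hFTC T' hT'0
      have heq : ∫ s in Ioc (0:ℝ) T', h s = ∫ s in (0:ℝ)..T', h s :=
        (intervalIntegral.integral_of_le hT'0).symm
      rw [heq]
      have := hc (φ T')
      linarith
    have hbig : C / ε < (volume E).toReal :=
      (ENNReal.ofReal_lt_iff_lt_toReal (div_nonneg hC0 hε.le) hEfin).1 hk
    have hsmall : (volume E).toReal ≤ C / ε := by
      rw [le_div_iff₀ hε]
      calc (volume E).toReal * ε = ε * (volume E).toReal := mul_comm _ _
        _ ≤ ∫ s in E, -h s := step1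
        _ ≤ ∫ s in Ioc 0 T', -h s := step2
        _ ≤ C := step3
    linarith
  -- construct the sequence
  have hchoice : ∀ j : ℕ, ∃ t, (j:ℝ) < t ∧ σ t = q ∧ W q (φ t) < 1/((j:ℝ)+1) :=
    fun j => key (1/((j:ℝ)+1)) (by positivity) j (Nat.cast_nonneg j)
  choose t ht1 ht2 ht3 using hchoice
  refine ⟨t, fun j => ⟨le_trans (Nat.cast_nonneg j) (ht1 j).le, ht2 j⟩, ?_, ?_⟩
  · exact tendsto_atTop_mono (fun j => (ht1 j).le) tendsto_natCast_atTop_atTop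
  · exact squeeze_zero (fun j => hWnn q _) (fun j => (ht3 j).le)
      tendsto_one_div_add_atTop_nhds_zero_nat
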